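/- Let N ≥ 1 be an integer and 1 < p < 2. Suppose (q_n) is a sequence of reals with q_n > p and q_n → ∞, and for each n let v_n be a radial Neumann solution with exponent q_n. Assume v_n → v uniformly on [0,1] for some continuous nondecreasing function v, and that there is R̄ ∈ (0,1] with v(r) < 1 for every r ∈ [0,R̄). Then v is differentiable on (0,R̄) and, for every continuously differentiable function φ : ℝ → ℝ whose support is a compact subset of the open interval (0,R̄), one has ∫_0^{R̄} r^{N−1}·( v'(r)^{p−1}·φ'(r) + v(r)^{p−1}·φ(r) ) dr = 0; that is, v weakly solves −(r^{N−1}(v')^{p−1})' + r^{N−1}v^{p−1} = 0 on (0,R̄), the radial form of the limit equation −Δ_p v + v^{p−1} = 0 in B_{R̄}. -/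

import Mathlib

open Real Set Filter intervalIntegral
open Topology

/-- `v : [0,1] → ℝ` is a radial Neumann solution with exponent `q` of
`-Δ_p v + v^{p-1} = v^{q-1}` in the unit ball of `ℝ^N`, in the cone of positive,
radially nondecreasing functions; `v'` is its derivative on `[0,1]`. -/
def IsRadialNeumannSol (N : ℕ) (p q : ℝ) (v v' : ℝ → ℝ) : Prop :=
  (∀ r ∈ Set.Icc (0:ℝ) 1, HasDerivWithinAt v (v' r) (Set.Icc (0:ℝ) 1) r) ∧
  ContinuousOn v' (Set.Icc (0:ℝ) 1) ∧
  (∀ r ∈ Set.Icc (0:ℝ) 1, 0 < v r) ∧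
  MonotoneOn v (Set.Icc (0:ℝ) 1) ∧
  (∀ r ∈ Set.Icc (0:ℝ) 1, 0 ≤ v' r) ∧
  v' 0 = 0 ∧ v' 1 = 0 ∧
  (∀ r ∈ Set.Ioo (0:ℝ) 1,
    HasDerivAt (fun s => s ^ (N - 1) * v' s ^ (p - 1))
      (r ^ (N - 1) * (v r ^ (p - 1) - v r ^ (q - 1))) r)

lemma aux_rpow_add_le {x y a : ℝ} (hx : 0 ≤ x) (hy : 0 ≤ y)
    (ha0 : 0 ≤ a) (ha1 : a ≤ 1) : (x + y) ^ a ≤ x ^ a + y ^ a := by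
  have h := NNReal.rpow_add_le_add_rpow x.toNNReal y.toNNReal ha0 ha1
  have h2 := NNReal.coe_le_coe.2 h
  push_cast at h2
  rwa [Real.coe_toNNReal x hx, Real.coe_toNNReal y hy] at h2

lemma aux_abs_rpow_sub_rpow {a : ℝ} (ha0 : 0 < a) (ha1 : a ≤ 1) {x y : ℝ}
    (hx : 0 ≤ x) (hy : 0 ≤ y) : |x ^ a - y ^ a| ≤ |x - y| ^ a := by
  wlog h : y ≤ x generalizing x y
  · rw [abs_sub_comm, abs_sub_comm x y]; exact this hy hx (le_of_not_ge h)
  have h1 : x ^ a ≤ (x - y) ^ a + y ^ a := by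
    calc x ^ a = ((x - y) + y) ^ a := by ring_nf
    _ ≤ (x - y) ^ a + y ^ a := aux_rpow_add_le (by linarith) hy ha0.le ha1
  have h2 : y ^ a ≤ x ^ a := Real.rpow_le_rpow hy h ha0.le
  rw [abs_of_nonneg (sub_nonneg.2 h2), abs_of_nonneg (sub_nonneg.2 h)]
  linarith


/-- If the solutions `v_n` converge uniformly to `v` with `v < 1` on `[0,R̄)`, then
`v` is differentiable on `(0,R̄)` and weakly solves the limit equation
`-(r^{N-1}(v')^{p-1})' + r^{N-1} v^{p-1} = 0` on `(0,R̄)`, the radial form of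
`-Δ_p v + v^{p-1} = 0` in `B_{R̄}`. -/
theorem limit_equation
    (N : ℕ) (hN : 1 ≤ N) (p : ℝ) (hp1 : 1 < p) (hp2 : p < 2)
    (q : ℕ → ℝ) (hq : ∀ n, p < q n) (hqtop : Tendsto q atTop atTop)
    (v v' : ℕ → ℝ → ℝ)
    (hsol : ∀ n, IsRadialNeumannSol N p (q n) (v n) (v' n))
    (vinf : ℝ → ℝ) (hvinfcont : ContinuousOn vinf (Set.Icc (0:ℝ) 1))
    (hvinfmono : MonotoneOn vinf (Set.Icc (0:ℝ) 1))
    (hconv : TendstoUniformlyOn (fun n r => v n r) vinf atTop (Set.Icc (0:ℝ) 1))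
    (Rbar : ℝ) (hRbar : Rbar ∈ Set.Ioc (0:ℝ) 1)
    (hbelow : ∀ r ∈ Set.Ico (0:ℝ) Rbar, vinf r < 1) :
    (∀ r ∈ Set.Ioo (0:ℝ) Rbar, DifferentiableAt ℝ vinf r) ∧
    ∀ φ φ' : ℝ → ℝ, (∀ x, HasDerivAt φ (φ' x) x) → Continuous φ' →
      HasCompactSupport φ → tsupport φ ⊆ Set.Ioo (0:ℝ) Rbar →
      (∫ r in (0:ℝ)..Rbar, r ^ (N - 1) *
        (deriv vinf r ^ (p - 1) * φ' r + vinf r ^ (p - 1) * φ r)) = 0 := by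
  obtain ⟨hRbar0, hRbar1⟩ := hRbar
  have hp1' : (0:ℝ) < p - 1 := by linarith
  have hqn1 : ∀ n, (0:ℝ) ≤ q n - 1 := fun n => by linarith [hq n]
  -- basic facts about the solutions
  have hCont : ∀ n, ContinuousOn (v n) (Icc (0:ℝ) 1) :=
    fun n r hr => ((hsol n).1 r hr).continuousWithinAt
  have hv'c : ∀ n, ContinuousOn (v' n) (Icc (0:ℝ) 1) := fun n => (hsol n).2.1
  have hvpos : ∀ n, ∀ r ∈ Icc (0:ℝ) 1, 0 < v n r := fun n => (hsol n).2.2.1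
  have hv'nn : ∀ n, ∀ r ∈ Icc (0:ℝ) 1, 0 ≤ v' n r := fun n => (hsol n).2.2.2.2.1
  have heqn := fun n => (hsol n).2.2.2.2.2.2.2
  have hvinf0 : ∀ r ∈ Icc (0:ℝ) 1, 0 ≤ vinf r := fun r hr =>
    ge_of_tendsto' (hconv.tendsto_at hr) (fun n => (hvpos n r hr).le)
  -- the clamp function
  set c : ℝ → ℝ := fun s => min (max s 0) 1 with hcdef
  have hcmem : ∀ s, c s ∈ Icc (0:ℝ) 1 :=
    fun s => ⟨le_min (le_max_right s 0) zero_le_one, min_le_right _ _⟩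
  have hceq : ∀ s ∈ Icc (0:ℝ) 1, c s = s := by
    intro s hs
    simp only [hcdef, max_eq_left hs.1, min_eq_left hs.2]
  have hccont : Continuous c := (continuous_id.max continuous_const).min continuous_const
  -- the limit flux integrand and primitive
  set η : ℝ → ℝ := fun s => c s ^ (N - 1) * vinf (c s) ^ (p - 1) with hηdef
  have hηcont : Continuous η := by
    apply Continuous.mul
    · exact (hccont.pow (N-1))
    · exact (hvinfcont.comp_continuous hccont hcmem).rpow_const
        (fun x => Or.inr hp1'.le)
  have hηnn : ∀ s, 0 ≤ η s := fun s =>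
    mul_nonneg (pow_nonneg (hcmem s).1 _) (Real.rpow_nonneg (hvinf0 _ (hcmem s)) _)
  have hηeq : ∀ s ∈ Icc (0:ℝ) 1, η s = s ^ (N - 1) * vinf s ^ (p - 1) := by
    intro s hs; simp only [hηdef, hceq s hs]
  set F : ℝ → ℝ := fun r => ∫ s in (0:ℝ)..r, η s with hFdef
  have hFderiv : ∀ r, HasDerivAt F (η r) r := by
    intro r
    exact intervalIntegral.integral_hasDerivAt_right
      (hηcont.intervalIntegrable _ _)
      ⟨univ, univ_mem, (hηcont.aestronglyMeasurable).restrict⟩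
      hηcont.continuousAt
  have hFcont : Continuous F := by
    rw [continuous_iff_continuousAt]; exact fun r => (hFderiv r).continuousAt
  have hFnn : ∀ r, 0 ≤ r → 0 ≤ F r := fun r hr =>
    intervalIntegral.integral_nonneg hr (fun t _ => hηnn t)
  -- bound for F
  obtain ⟨xC, -, hxC⟩ := isCompact_Icc.exists_isMaxOn (Set.nonempty_Icc.2 zero_le_one)
    hFcont.continuousOn
  set C : ℝ := F xC with hCdef
  have hC : ∀ y ∈ Icc (0:ℝ) 1, F y ≤ C := fun y hy => hxC hy
  have hC0 : 0 ≤ C := by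
    have := hC 0 ⟨le_refl 0, zero_le_one⟩
    simpa [hFdef] using this
  -- the flux functions W n and their integral representation
  set W : ℕ → ℝ → ℝ := fun n r => r ^ (N - 1) * v' n r ^ (p - 1) with hWdef
  have hWnn : ∀ n, ∀ r ∈ Icc (0:ℝ) 1, 0 ≤ W n r := fun n r hr =>
    mul_nonneg (pow_nonneg hr.1 _) (Real.rpow_nonneg (hv'nn n r hr) _)
  have hW0 : ∀ n, W n 0 = 0 := by
    intro n
    simp only [hWdef, (hsol n).2.2.2.2.2.1, Real.zero_rpow hp1'.ne', mul_zero]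
  have hWcont : ∀ n, ContinuousOn (W n) (Icc (0:ℝ) 1) := by
    intro n
    exact (continuous_id.pow _).continuousOn.mul
      ((hv'c n).rpow_const (fun x _ => Or.inr hp1'.le))
  set ηn : ℕ → ℝ → ℝ :=
    fun n s => s ^ (N - 1) * (v n s ^ (p - 1) - v n s ^ (q n - 1)) with hηndef
  have hηncont : ∀ n, ContinuousOn (ηn n) (Icc (0:ℝ) 1) := by
    intro n
    exact (continuous_id.pow _).continuousOn.mul
      (((hCont n).rpow_const (fun x _ => Or.inr hp1'.le)).sub
        ((hCont n).rpow_const (fun x _ => Or.inr (hqn1 n))))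
  have hWrepr : ∀ n, ∀ r ∈ Icc (0:ℝ) 1, W n r = ∫ s in (0:ℝ)..r, ηn n s := by
    intro n r hr
    have h := intervalIntegral.integral_eq_sub_of_hasDeriv_right_of_le hr.1
      ((hWcont n).mono (Icc_subset_Icc le_rfl hr.2))
      (fun x hx => ((heqn n x ⟨hx.1, lt_of_lt_of_le hx.2 hr.2⟩).hasDerivWithinAt))
      (((hηncont n).mono (by rw [uIcc_of_le hr.1]; exact Icc_subset_Icc le_rfl hr.2)).intervalIntegrable)
    rw [h, hW0 n, sub_zero]
  -- key uniform estimate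
  have hWF : ∀ R', R' ∈ Ioo (0:ℝ) Rbar → ∀ ε : ℝ, 0 < ε →
      ∀ᶠ n in atTop, ∀ s ∈ Icc (0:ℝ) R', |W n s - F s| ≤ ε := by
    intro R' hR' ε hε
    have hR'1 : R' ≤ 1 := le_of_lt (lt_of_lt_of_le hR'.2 hRbar1)
    set m : ℝ := vinf R' with hmdef
    have hm1 : m < 1 := hbelow R' ⟨hR'.1.le, hR'.2⟩
    have hm0 : 0 ≤ m := hvinf0 R' ⟨hR'.1.le, hR'1⟩
    set m' : ℝ := (1 + m) / 2 with hm'def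
    have hm'0 : 0 < m' := by rw [hm'def]; linarith
    have hm'1 : m' < 1 := by rw [hm'def]; linarith
    set δ : ℝ := min ((1 - m)/2) ((ε/2) ^ (p-1)⁻¹) with hδdef
    have hδ0 : 0 < δ := lt_min (by linarith) (Real.rpow_pos_of_pos (by linarith) _)
    have hδ2 : δ ^ (p - 1) ≤ ε / 2 := by
      have h1 : δ ^ (p-1) ≤ ((ε/2) ^ (p-1)⁻¹) ^ (p-1) :=
        Real.rpow_le_rpow hδ0.le (min_le_right _ _) hp1'.le
      rwa [Real.rpow_inv_rpow (by linarith) hp1'.ne'] at h1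
    have E1 := (Metric.tendstoUniformlyOn_iff.mp hconv) δ hδ0
    have E2 : ∀ᶠ n in atTop, m' ^ (q n - 1) ≤ ε / 2 := by
      have h1 : Tendsto (fun x : ℝ => m' ^ x) atTop (𝓝 0) :=
        tendsto_rpow_atTop_of_base_lt_one m' (by linarith) hm'1
      have h2 : Tendsto (fun n => m' ^ (q n - 1)) atTop (𝓝 0) := by
        have := h1.comp (tendsto_atTop_add_const_right atTop (-1) hqtop)
        simpa [sub_eq_add_neg, Function.comp_def] using this
      exact h2.eventually_le_const (by linarith)
    filter_upwards [E1, E2] with n h1 h2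
    intro s hs
    have hs1 : s ∈ Icc (0:ℝ) 1 := ⟨hs.1, le_trans hs.2 hR'1⟩
    -- pointwise bound on the integrands
    have hpt : ∀ t ∈ Icc (0:ℝ) R', |ηn n t - η t| ≤ ε := by
      intro t ht
      have ht1 : t ∈ Icc (0:ℝ) 1 := ⟨ht.1, le_trans ht.2 hR'1⟩
      have hdist : |vinf t - v n t| < δ := by
        rw [← Real.dist_eq]; exact h1 t ht1
      have hvt0 : 0 ≤ v n t := (hvpos n t ht1).le
      have hvtm : v n t ≤ m' := by
        have hmono := hvinfmono ht1 ⟨hR'.1.le, hR'1⟩ ht.2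
        have : v n t < vinf t + δ := by
          have := abs_lt.1 hdist; linarith [this.1]
        have hδle : δ ≤ (1 - m)/2 := min_le_left _ _
        rw [hm'def]; rw [← hmdef] at hmono; linarith
      have hterm1 : |v n t ^ (p-1) - vinf t ^ (p-1)| ≤ ε / 2 := by
        have ha := aux_abs_rpow_sub_rpow hp1' (by linarith) hvt0 (hvinf0 t ht1)
        have hb : |v n t - vinf t| ^ (p-1) ≤ δ ^ (p-1) := by
          apply Real.rpow_le_rpow (abs_nonneg _) _ hp1'.le
          rw [abs_sub_comm]; exact hdist.le
        exact le_trans ha (le_trans hb hδ2)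
      have hterm2 : v n t ^ (q n - 1) ≤ ε / 2 := by
        refine le_trans ?_ h2
        exact Real.rpow_le_rpow hvt0 hvtm (hqn1 n)
      have hterm2' : 0 ≤ v n t ^ (q n - 1) := Real.rpow_nonneg hvt0 _
      have hηt : η t = t ^ (N-1) * vinf t ^ (p-1) := hηeq t ht1
      have htpow : t ^ (N - 1) ≤ 1 := pow_le_one₀ ht1.1 ht1.2
      have htpow0 : (0:ℝ) ≤ t ^ (N - 1) := pow_nonneg ht1.1 _
      have habs : |ηn n t - η t| =
          t ^ (N-1) * |v n t ^ (p-1) - vinf t ^ (p-1) - v n t ^ (q n - 1)| := by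
        rw [hηndef, hηt]
        rw [show t ^ (N-1) * (v n t ^ (p-1) - v n t ^ (q n - 1)) - t ^ (N-1) * vinf t ^ (p-1)
          = t ^ (N-1) * (v n t ^ (p-1) - vinf t ^ (p-1) - v n t ^ (q n - 1)) by ring]
        rw [abs_mul, abs_of_nonneg htpow0]
      rw [habs]
      calc t ^ (N-1) * |v n t ^ (p-1) - vinf t ^ (p-1) - v n t ^ (q n - 1)|
          ≤ 1 * (|v n t ^ (p-1) - vinf t ^ (p-1)| + v n t ^ (q n - 1)) := by
            apply mul_le_mul htpow _ (abs_nonneg _) zero_le_one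
            calc |v n t ^ (p-1) - vinf t ^ (p-1) - v n t ^ (q n - 1)|
                ≤ |v n t ^ (p-1) - vinf t ^ (p-1)| + |v n t ^ (q n - 1)| := abs_sub _ _
              _ = |v n t ^ (p-1) - vinf t ^ (p-1)| + v n t ^ (q n - 1) := by
                  rw [abs_of_nonneg hterm2']
        _ ≤ 1 * (ε/2 + ε/2) := by
            apply mul_le_mul_of_nonneg_left _ zero_le_one
            linarith
        _ = ε := by ring
    -- integrate the bound
    have hint1 : IntervalIntegrable (ηn n) MeasureTheory.volume 0 s :=
      ((hηncont n).mono (by rw [uIcc_of_le hs.1]; exact Icc_subset_Icc le_rfl hs1.2)).intervalIntegrable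
    have hint2 : IntervalIntegrable η MeasureTheory.volume 0 s :=
      hηcont.intervalIntegrable _ _
    have hWs : W n s - F s = ∫ t in (0:ℝ)..s, (ηn n t - η t) := by
      rw [hWrepr n s hs1, hFdef]
      exact (intervalIntegral.integral_sub hint1 hint2).symm
    rw [hWs]
    have hbd := intervalIntegral.norm_integral_le_of_norm_le_const
      (C := ε) (f := fun t => ηn n t - η t) (a := 0) (b := s) ?_
    · rw [Real.norm_eq_abs] at hbd
      calc |∫ t in (0:ℝ)..s, (ηn n t - η t)| ≤ ε * |s - 0| := hbd
        _ ≤ ε * 1 := by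
            apply mul_le_mul_of_nonneg_left _ hε.le
            rw [sub_zero, abs_of_nonneg hs.1]; exact hs1.2
        _ = ε := mul_one ε
    · intro t ht
      rw [uIoc_of_le hs.1] at ht
      have : t ∈ Icc (0:ℝ) R' := ⟨ht.1.le, le_trans ht.2 hs.2⟩
      rw [Real.norm_eq_abs]
      exact hpt t this
  -- pointwise convergence of W n to F
  have hWtend : ∀ s, 0 ≤ s → s < Rbar → Tendsto (fun n => W n s) atTop (𝓝 (F s)) := by
    intro s hs0 hsR
    rw [Metric.tendsto_atTop]
    intro ε hε
    have hR' : (s + Rbar)/2 ∈ Ioo (0:ℝ) Rbar := ⟨by linarith, by linarith⟩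
    have := hWF ((s + Rbar)/2) hR' (ε/2) (by linarith)
    obtain ⟨Nn, hNn⟩ := eventually_atTop.1 this
    refine ⟨Nn, fun n hn => ?_⟩
    have := hNn n hn s ⟨hs0, by linarith⟩
    rw [Real.dist_eq]
    linarith
  -- the candidate derivative
  set g : ℝ → ℝ := fun s => (F s / s ^ (N - 1)) ^ (p - 1)⁻¹ with hgdef
  have hgca : ∀ s : ℝ, 0 < s → ContinuousAt g s := by
    intro s hs
    have h1 : ContinuousAt (fun t : ℝ => F t / t ^ (N-1)) s :=
      (hFcont.continuousAt).div ((continuous_pow (N-1)).continuousAt)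
        (pow_ne_zero _ hs.ne')
    exact (Real.continuousAt_rpow_const _ _ (Or.inr (by positivity))).comp h1
  have hgcontOn : ContinuousOn g (Ioi (0:ℝ)) :=
    fun s hs => (hgca s hs).continuousWithinAt
  -- representation of v' n via W n
  have hv'rep : ∀ n, ∀ s : ℝ, 0 < s → s ≤ 1 →
      v' n s = (W n s / s ^ (N - 1)) ^ (p - 1)⁻¹ := by
    intro n s hs0 hs1
    have hsne : s ^ (N - 1) ≠ 0 := pow_ne_zero _ hs0.ne'
    have h1 : W n s / s ^ (N-1) = v' n s ^ (p-1) := by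
      rw [hWdef]; field_simp
    rw [h1, Real.rpow_rpow_inv (hv'nn n s ⟨hs0.le, hs1⟩) hp1'.ne']
  -- FTC for v n
  have hvFTC : ∀ n, ∀ a b : ℝ, 0 ≤ a → a ≤ b → b ≤ 1 →
      v n b - v n a = ∫ s in a..b, v' n s := by
    intro n a b ha hab hb1
    refine (intervalIntegral.integral_eq_sub_of_hasDeriv_right_of_le hab
      ((hCont n).mono (Icc_subset_Icc ha hb1))
      (fun x hx => ?_)
      (((hv'c n).mono (by rw [uIcc_of_le hab]; exact Icc_subset_Icc ha hb1)).intervalIntegrable)).symm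
    have hx1 : x ∈ Icc (0:ℝ) 1 := ⟨le_trans ha hx.1.le, le_trans hx.2.le hb1⟩
    exact (((hsol n).1 x hx1).hasDerivAt
      (Icc_mem_nhds (lt_of_le_of_lt ha hx.1) (lt_of_lt_of_le hx.2 hb1))).hasDerivWithinAt
  -- key identity: vinf r - vinf δ0 = ∫ g
  have hkey : ∀ δ0 r : ℝ, 0 < δ0 → δ0 ≤ r → r < Rbar →
      vinf r - vinf δ0 = ∫ s in δ0..r, g s := by
    intro δ0 r hδ0 hδr hrR
    have hr1 : r ≤ 1 := le_of_lt (lt_of_lt_of_le hrR hRbar1)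
    have hR' : (r + Rbar)/2 ∈ Ioo (0:ℝ) Rbar := ⟨by linarith, by linarith⟩
    have hrR' : r ≤ (r + Rbar)/2 := by linarith
    have hL : Tendsto (fun n => v n r - v n δ0) atTop (𝓝 (vinf r - vinf δ0)) :=
      (hconv.tendsto_at ⟨le_trans hδ0.le hδr, hr1⟩).sub
        (hconv.tendsto_at ⟨hδ0.le, le_trans hδr hr1⟩)
    have hδ0pow : (0:ℝ) < δ0 ^ (N - 1) := pow_pos hδ0 _
    have hsub1 : uIoc δ0 r ⊆ Icc (0:ℝ) 1 := by
      rw [uIoc_of_le hδr]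
      exact fun t ht => ⟨le_trans hδ0.le ht.1.le, le_trans ht.2 hr1⟩
    have hR0 : Tendsto (fun n => ∫ s in δ0..r, v' n s) atTop (𝓝 (∫ s in δ0..r, g s)) := by
      apply intervalIntegral.tendsto_integral_filter_of_dominated_convergence
        (fun _ => ((C + 1) / δ0 ^ (N - 1)) ^ (p - 1)⁻¹)
      · exact Eventually.of_forall fun n =>
          ((hv'c n).mono hsub1).aestronglyMeasurable measurableSet_uIoc
      · filter_upwards [hWF ((r + Rbar)/2) hR' 1 one_pos] with n hn
        refine Eventually.of_forall fun s hs => ?_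
        rw [uIoc_of_le hδr] at hs
        have hs1 : s ∈ Icc (0:ℝ) 1 :=
          ⟨le_trans hδ0.le hs.1.le, le_trans hs.2 hr1⟩
        have hWle : W n s ≤ C + 1 := by
          have h3 := hn s ⟨hs1.1, le_trans hs.2 hrR'⟩
          have h4 := hC s hs1
          have := abs_le.1 h3
          linarith [this.1]
        have hW0' : 0 ≤ W n s := hWnn n s hs1
        have hspow : δ0 ^ (N-1) ≤ s ^ (N-1) := pow_le_pow_left₀ hδ0.le hs.1.le _
        rw [Real.norm_eq_abs, abs_of_nonneg (hv'nn n s hs1),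
          hv'rep n s (lt_of_lt_of_le hδ0 hs.1.le) hs1.2]
        apply Real.rpow_le_rpow (div_nonneg hW0' (pow_nonneg hs1.1 _)) _ (by positivity)
        exact div_le_div₀ (by linarith) hWle hδ0pow hspow
      · exact intervalIntegrable_const
      · refine Eventually.of_forall fun s hs => ?_
        rw [uIoc_of_le hδr] at hs
        have hs0 : (0:ℝ) < s := lt_of_lt_of_le hδ0 hs.1.le
        have hs1 : s ≤ 1 := le_trans hs.2 hr1
        have heq2 : (fun n => v' n s) = fun n => (W n s / s ^ (N-1)) ^ (p-1)⁻¹ :=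
          funext fun n => hv'rep n s hs0 hs1
        rw [heq2]
        have hWt := (hWtend s hs0.le (lt_of_le_of_lt hs.2 hrR)).div_const (s ^ (N-1))
        exact ((Real.continuousAt_rpow_const _ _ (Or.inr (by positivity))).tendsto).comp hWt
    have hR1 : Tendsto (fun n => v n r - v n δ0) atTop (𝓝 (∫ s in δ0..r, g s)) :=
      hR0.congr (fun n => (hvFTC n δ0 r hδ0.le hδr hr1).symm)
    exact tendsto_nhds_unique hL hR1
  -- differentiability
  have hder : ∀ r0 ∈ Ioo (0:ℝ) Rbar, HasDerivAt vinf (g r0) r0 := by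
    intro r0 hr0
    set δ0 : ℝ := r0 / 2 with hδ0def
    have hδ0 : 0 < δ0 := by rw [hδ0def]; linarith [hr0.1]
    have hδ0r : δ0 < r0 := by rw [hδ0def]; linarith [hr0.1]
    have hG : HasDerivAt (fun r => vinf δ0 + ∫ s in δ0..r, g s) (g r0) r0 := by
      apply HasDerivAt.const_add
      apply intervalIntegral.integral_hasDerivAt_right
      · apply ContinuousOn.intervalIntegrable
        apply hgcontOn.mono
        rw [uIcc_of_le hδ0r.le]
        exact fun t ht => lt_of_lt_of_le hδ0 ht.1
      · exact ⟨Ioi 0, Ioi_mem_nhds hr0.1,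
          hgcontOn.aestronglyMeasurable measurableSet_Ioi⟩
      · exact hgca r0 hr0.1
    apply hG.congr_of_eventuallyEq
    have hmem : Ioo δ0 Rbar ∈ 𝓝 r0 := Ioo_mem_nhds hδ0r hr0.2
    filter_upwards [hmem] with r hr
    have := hkey δ0 r hδ0 hr.1.le hr.2
    linarith
  constructor
  · exact fun r hr => (hder r hr).differentiableAt
  -- the weak formulation
  intro φ φ' hφ hφ'c hφcs hφsupp
  have hFrepr : ∀ r ∈ Ioo (0:ℝ) Rbar, r ^ (N-1) * deriv vinf r ^ (p-1) = F r := by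
    intro r hr
    rw [(hder r hr).deriv]
    have hgr : g r ^ (p - 1) = F r / r ^ (N-1) := by
      rw [hgdef]
      exact Real.rpow_inv_rpow (div_nonneg (hFnn r hr.1.le) (pow_nonneg hr.1.le _)) hp1'.ne'
    rw [hgr, mul_comm]
    exact div_mul_cancel₀ _ (pow_ne_zero _ hr.1.ne')
  -- φ and φ' vanish outside tsupport
  have hφ0 : ∀ x, x ∉ tsupport φ → φ x = 0 := fun x hx =>
    image_eq_zero_of_notMem_tsupport hx
  have hφ'0 : ∀ x, x ∉ tsupport φ → φ' x = 0 := by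
    intro x hx
    have hev : φ =ᶠ[𝓝 x] 0 := by
      filter_upwards [(isClosed_tsupport φ).isOpen_compl.mem_nhds hx] with y hy
      exact image_eq_zero_of_notMem_tsupport hy
    have h2 := hev.deriv_eq
    rw [(hφ x).deriv] at h2
    rw [h2, show (0:ℝ→ℝ) = fun _ => (0:ℝ) from rfl, deriv_const]
  -- the product F * φ
  set ψ : ℝ → ℝ := fun r => η r * φ r + F r * φ' r with hψdef
  have hψcont : Continuous ψ := by
    have hφcont : Continuous φ :=
      continuous_iff_continuousAt.mpr fun x => (hφ x).continuousAt
    exact (hηcont.mul hφcont).add (hFcont.mul hφ'c)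
  have hFφderiv : ∀ r, HasDerivAt (fun t => F t * φ t) (ψ r) r :=
    fun r => (hFderiv r).mul (hφ r)
  have hψint : (∫ r in (0:ℝ)..Rbar, ψ r) = F Rbar * φ Rbar - F 0 * φ 0 :=
    intervalIntegral.integral_eq_sub_of_hasDerivAt
      (fun r _ => hFφderiv r) (hψcont.intervalIntegrable _ _)
  have hφR : φ Rbar = 0 := hφ0 _ (fun h => (lt_irrefl Rbar (hφsupp h).2))
  have hφatzero : φ 0 = 0 := hφ0 _ (fun h => (lt_irrefl (0:ℝ) (hφsupp h).1))
  rw [hφR, hφatzero] at hψint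
  simp only [mul_zero, sub_zero] at hψint
  -- now identify the target integrand with ψ on [0, Rbar]
  have hcongr : ∀ r ∈ Icc (0:ℝ) Rbar,
      r ^ (N - 1) * (deriv vinf r ^ (p - 1) * φ' r + vinf r ^ (p - 1) * φ r) = ψ r := by
    intro r hr
    by_cases hmem : r ∈ Ioo (0:ℝ) Rbar
    · have h1 := hFrepr r hmem
      have h2 : η r = r ^ (N-1) * vinf r ^ (p-1) :=
        hηeq r ⟨hr.1, le_trans hr.2 hRbar1⟩
      simp only [hψdef]
      rw [h2]
      linear_combination (φ' r) * h1
    · have hnt : r ∉ tsupport φ := fun h => hmem (hφsupp h)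
      simp only [hψdef]
      rw [hφ0 r hnt, hφ'0 r hnt]
      ring
  calc (∫ r in (0:ℝ)..Rbar, r ^ (N - 1) *
        (deriv vinf r ^ (p - 1) * φ' r + vinf r ^ (p - 1) * φ r))
      = ∫ r in (0:ℝ)..Rbar, ψ r := by
        apply intervalIntegral.integral_congr
        rw [uIcc_of_le hRbar0.le]
        exact hcongr
    _ = 0 := hψint
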